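/- A Laurent polynomial f ∈ ℤ[x^{±1}] satisfies f(x) = f(−x⁻¹) (i.e., f is invariant under the ring automorphism x ↦ −x⁻¹) if and only if there exists a polynomial g ∈ ℤ[z] with f = g(x − x⁻¹); moreover, such g is unique. -/

import Mathlib

open LaurentPolynomial

namespace ProofAux

noncomputable def w : LaurentPolynomial ℤ := T 1 - T (-1)

lemma T_mul_apply (n : ℤ) (f : LaurentPolynomial ℤ) (m : ℤ) :
    (T n * f : LaurentPolynomial ℤ).coeff m = f.coeff (m - n) := by
  have := AddMonoidAlgebra.coeff_single_mul_apply f (1 : ℤ) n m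
  rw [one_mul] at this
  rw [show (T n : LaurentPolynomial ℤ) = AddMonoidAlgebra.single n 1 from rfl, this, neg_add_eq_sub]

lemma mul_T_apply (f : LaurentPolynomial ℤ) (n : ℤ) (m : ℤ) :
    (f * T n : LaurentPolynomial ℤ).coeff m = f.coeff (m - n) := by
  have := AddMonoidAlgebra.coeff_mul_single_apply f (1 : ℤ) n m
  rw [mul_one] at this
  rw [show (T n : LaurentPolynomial ℤ) = AddMonoidAlgebra.single n 1 from rfl, this, ← sub_eq_add_neg]

lemma one_apply (m : ℤ) : (1 : LaurentPolynomial ℤ).coeff m = if m = 0 then 1 else 0 := by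
  rw [← T_zero, T_apply]
  simp [eq_comm]

lemma wpow_facts (N : ℕ) :
    (w ^ N).coeff (N : ℤ) = 1 ∧ (w ^ N).coeff (-(N : ℤ)) = (-1) ^ N ∧
      ∀ m : ℤ, (N : ℤ) < |m| → (w ^ N).coeff m = 0 := by
  induction N with
  | zero =>
    refine ⟨by simp [one_apply], by simp [one_apply], ?_⟩
    intro m hm
    simp only [pow_zero, one_apply]
    rw [if_neg]
    · rintro rfl; simp at hm
  | succ N ih =>
    obtain ⟨h1, h2, h3⟩ := ih
    have key : ∀ m : ℤ, (w ^ (N + 1)).coeff m = (w ^ N).coeff (m - 1) - (w ^ N).coeff (m + 1) := by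
      intro m
      rw [pow_succ, w, mul_sub, AddMonoidAlgebra.coeff_sub, Finsupp.sub_apply, mul_T_apply, mul_T_apply]
      simp [sub_neg_eq_add]
    refine ⟨?_, ?_, ?_⟩
    · rw [key]
      push_cast
      rw [add_sub_cancel_right, h1, h3 ((N:ℤ)+1+1) (by rw [abs_of_nonneg] <;> omega), sub_zero]
    · rw [key]
      push_cast
      have e1 : -((N:ℤ)+1) - 1 = -((N:ℤ)+2) := by ring
      have e2 : -((N:ℤ)+1) + 1 = -(N:ℤ) := by ring
      rw [e1, e2, h3 (-((N:ℤ)+2)) (by rw [abs_of_nonpos] <;> omega), h2]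
      ring
    · intro m hm
      push_cast at hm
      rw [key, h3 (m-1) (by rw [lt_abs] at hm ⊢; omega),
        h3 (m+1) (by rw [lt_abs] at hm ⊢; omega), sub_zero]

lemma wpow_apply_self (N : ℕ) : (w ^ N).coeff (N : ℤ) = 1 := (wpow_facts N).1
lemma wpow_apply_neg_self (N : ℕ) : (w ^ N).coeff (-(N : ℤ)) = (-1) ^ N := (wpow_facts N).2.1
lemma wpow_apply_of_lt (N : ℕ) (m : ℤ) (h : (N : ℤ) < |m|) : (w ^ N).coeff m = 0 :=
  (wpow_facts N).2.2 m h

lemma C_mul_wpow_apply (a : ℤ) (N : ℕ) (m : ℤ) :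
    (C a * w ^ N).coeff m = a * (w ^ N).coeff m := by
  rw [← single_eq_C, AddMonoidAlgebra.coeff_single_mul_apply]
  simp

/-- injectivity of `g ↦ g(w)` -/
lemma aeval_w_injective : Function.Injective (Polynomial.aeval w : Polynomial ℤ →ₐ[ℤ] _) := by
  intro g₁ g₂ hg
  by_contra hne
  set g : Polynomial ℤ := g₁ - g₂ with hgdef
  have hg0 : g ≠ 0 := sub_ne_zero.mpr hne
  have hz : Polynomial.aeval w g = 0 := by rw [hgdef, map_sub, hg, sub_self]
  set d := g.natDegree with hd
  have : (Polynomial.aeval w g).coeff (d : ℤ) = 0 := by rw [hz]; simp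
  rw [Polynomial.aeval_def, Polynomial.eval₂_eq_sum, Polynomial.sum_def] at this
  have : (∑ k ∈ g.support, algebraMap ℤ (LaurentPolynomial ℤ) (g.coeff k) * w ^ k).coeff (d : ℤ)
      = 0 := this
  rw [AddMonoidAlgebra.coeff_sum, Finset.sum_apply'] at this
  have heach : ∀ k ∈ g.support,
      (algebraMap ℤ (LaurentPolynomial ℤ) (g.coeff k) * w ^ k).coeff (d : ℤ)
        = if k = d then g.coeff d else 0 := by
    intro k hk
    rw [← C_eq_algebraMap, C_mul_wpow_apply]
    by_cases hkd : k = d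
    · subst hkd; rw [wpow_apply_self, mul_one, if_pos rfl]
    · have hkl : k < d := lt_of_le_of_ne (Polynomial.le_natDegree_of_mem_supp k hk) hkd
      rw [wpow_apply_of_lt k (d : ℤ) (by rw [abs_of_nonneg] <;> [exact_mod_cast hkl; positivity]),
        mul_zero, if_neg hkd]
  rw [Finset.sum_congr rfl heach, Finset.sum_ite_eq' _ d] at this
  have hds : d ∈ g.support := by
    rw [Polynomial.mem_support_iff]
    exact Polynomial.leadingCoeff_ne_zero.mpr hg0
  rw [if_pos hds] at this
  exact (Polynomial.leadingCoeff_ne_zero.mpr hg0) this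

end ProofAux
namespace ProofAux2
open ProofAux

variable (σ : LaurentPolynomial ℤ →+* LaurentPolynomial ℤ)
  (hσ : σ (T 1) = -T (-1))

lemma C_eq_cast (a : ℤ) : ((a : ℤ) : LaurentPolynomial ℤ) = C a := by
  rw [C_eq_algebraMap]; simp [algebraMap_int_eq, eq_intCast]

lemma sigma_C (a : ℤ) : σ (C a) = C a := by
  have h : (C a : LaurentPolynomial ℤ) = (a : LaurentPolynomial ℤ) := by
    rw [C_eq_algebraMap]; simp [algebraMap_int_eq, eq_intCast]
  rw [h, map_intCast]

include hσ

lemma sigma_T_neg_one : σ (T (-1)) = -T 1 := by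
  have h1 : σ (T 1) * σ (T (-1)) = 1 := by
    rw [← map_mul, ← T_add]; norm_num
  have h2 : (-T (-1) : LaurentPolynomial ℤ) * (-T 1) = 1 := by
    rw [neg_mul_neg, ← T_add]; norm_num
  calc σ (T (-1)) = ((-T 1) * (-T (-1))) * σ (T (-1)) := by
        rw [neg_mul_neg, ← T_add]; norm_num
    _ = (-T 1) * (σ (T 1) * σ (T (-1))) := by rw [← hσ]; ring
    _ = -T 1 := by rw [h1, mul_one]

lemma sigma_T (n : ℤ) : σ (T n) = C (n.negOnePow : ℤ) * T (-n) := by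
  induction n using Int.induction_on with
  | zero => simp [map_one]
  | succ k ih =>
    rw [T_add, map_mul, ih, hσ, Int.negOnePow_succ, Units.val_neg, map_neg, neg_mul,
      mul_neg, mul_T_assoc, show -((k:ℤ)+1) = -(k:ℤ) + -1 by ring]
  | pred k ih =>
    rw [show (-(k:ℤ) - 1) = (-(k:ℤ)) + (-1) by ring, T_add, map_mul, ih, sigma_T_neg_one σ hσ]
    rw [show (-(k:ℤ)).negOnePow = -((-(k:ℤ))+(-1)).negOnePow by
      rw [Int.negOnePow_add]; simp, Units.val_neg, map_neg, neg_mul, mul_neg]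
    rw [neg_mul, neg_neg, mul_T_assoc, show (-(-(k:ℤ) + -1)) = (-(-(k:ℤ))) + 1 by push_cast; ring]

lemma sigma_apply (f : LaurentPolynomial ℤ) (m : ℤ) :
    (σ f).coeff m = ((-m).negOnePow : ℤ) * f.coeff (-m) := by
  have hf : f = ∑ n ∈ f.coeff.support, AddMonoidAlgebra.single n (f.coeff n) := by
    exact (AddMonoidAlgebra.sum_coeff_single f).symm
  conv_lhs => rw [hf]
  rw [map_sum, AddMonoidAlgebra.coeff_sum, Finset.sum_apply']
  have heach : ∀ n ∈ f.coeff.support,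
      (σ (AddMonoidAlgebra.single n (f.coeff n))).coeff m
        = if n = -m then ((-m).negOnePow : ℤ) * f.coeff (-m) else 0 := by
    intro n _
    rw [single_eq_C_mul_T, map_mul, sigma_C, sigma_T σ hσ, ← mul_assoc, ← map_mul C,
      ← single_eq_C_mul_T, AddMonoidAlgebra.coeff_single, Finsupp.single_apply]
    by_cases h : n = -m
    · subst h
      rw [if_pos (by ring), if_pos rfl, Int.negOnePow_neg, mul_comm]
    · rw [if_neg (by omega), if_neg h]
  rw [Finset.sum_congr rfl heach, Finset.sum_ite_eq' _ (-m)]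
  by_cases h : -m ∈ f.coeff.support
  · rw [if_pos h]
  · rw [if_neg h]
    have : f.coeff (-m) = 0 := Finsupp.notMem_support_iff.mp h
    rw [this, mul_zero]

lemma invariant_coeff {f : LaurentPolynomial ℤ} (hf : σ f = f) (m : ℤ) :
    f.coeff (-m) = (m.negOnePow : ℤ) * f.coeff m := by
  have := sigma_apply σ hσ f m
  rw [hf] at this
  rw [Int.negOnePow_neg] at this
  have h2 : (m.negOnePow : ℤ) * f.coeff m = (m.negOnePow : ℤ) * ((m.negOnePow : ℤ) * f.coeff (-m)) := by
    rw [← this]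
  have h3 : (m.negOnePow : ℤ) * (m.negOnePow : ℤ) = 1 := by
    rw [← Units.val_mul, Int.units_mul_self, Units.val_one]
  rw [h2, ← mul_assoc, h3, one_mul]

lemma sigma_w : σ w = w := by
  rw [w, map_sub, hσ, sigma_T_neg_one σ hσ]
  ring

lemma sigma_aeval (g : Polynomial ℤ) : σ (Polynomial.aeval w g) = Polynomial.aeval w g := by
  induction g using Polynomial.induction_on with
  | C a => rw [Polynomial.aeval_C]; simpa [algebraMap_int_eq, eq_intCast] using map_intCast σ a
  | add p q hp hq => rw [map_add, map_add, hp, hq]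
  | monomial n a ih =>
    rw [map_mul, map_mul, map_pow, map_pow]
    rw [show ((Polynomial.aeval w) (Polynomial.C a) : LaurentPolynomial ℤ)
      = (a : LaurentPolynomial ℤ) by simp [algebraMap_int_eq, eq_intCast]]
    rw [map_intCast, Polynomial.aeval_X, sigma_w σ hσ]

lemma exists_aeval (N : ℕ) : ∀ f : LaurentPolynomial ℤ,
    (∀ n : ℤ, (N : ℤ) < |n| → f.coeff n = 0) → σ f = f →
      ∃ g : Polynomial ℤ, Polynomial.aeval w g = f := by
  induction N with
  | zero =>
    intro f hb _
    refine ⟨Polynomial.C (f.coeff 0), ?_⟩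
    rw [Polynomial.aeval_C, ← C_eq_algebraMap, ← single_eq_C]
    ext m
    rw [AddMonoidAlgebra.coeff_single, Finsupp.single_apply]
    by_cases hm : m = 0
    · subst hm; rw [if_pos rfl]
    · rw [if_neg (by omega), hb m (by simpa using abs_pos.mpr hm)]
  | succ N ih =>
    intro f hb hinv
    set a := f.coeff ((N : ℤ) + 1) with ha
    set f' := f - C a * w ^ (N + 1) with hf'
    have hco : ∀ m : ℤ, f'.coeff m = f.coeff m - a * (w ^ (N + 1)).coeff m := by
      intro m; rw [hf', AddMonoidAlgebra.coeff_sub, Finsupp.sub_apply, C_mul_wpow_apply]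
    have hinv' : σ f' = f' := by
      rw [hf', map_sub, hinv, map_mul, sigma_C, map_pow, sigma_w σ hσ]
    have hb' : ∀ n : ℤ, (N : ℤ) < |n| → f'.coeff n = 0 := by
      intro n hn
      have h3 : n = (N : ℤ) + 1 ∨ n = -((N : ℤ) + 1) ∨ ((N : ℤ) + 1) < |n| := by
        rw [lt_abs] at hn ⊢; omega
      rcases h3 with h | h | h
      · subst h
        rw [hco, show ((N : ℤ) + 1) = ((N + 1 : ℕ) : ℤ) by push_cast; ring,
          wpow_apply_self, mul_one, show (((N + 1 : ℕ) : ℤ)) = (N : ℤ) + 1 by push_cast; ring,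
          ← ha, sub_self]
      · subst h
        rw [hco, show (-((N : ℤ) + 1)) = (-((N + 1 : ℕ) : ℤ)) by push_cast; ring,
          wpow_apply_neg_self]
        have := invariant_coeff σ hσ hinv ((N + 1 : ℕ) : ℤ)
        rw [this, Int.coe_negOnePow_natCast, show (((N + 1 : ℕ) : ℤ)) = (N : ℤ) + 1 by
          push_cast; ring, ← ha]
        ring
      · rw [hco, hb n (by rw [lt_abs] at h ⊢; omega),
          wpow_apply_of_lt (N + 1) n (by push_cast; exact h), mul_zero, sub_zero]
    obtain ⟨g, hg⟩ := ih f' hb' hinv'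
    refine ⟨g + Polynomial.C a * Polynomial.X ^ (N + 1), ?_⟩
    rw [map_add, hg, map_mul, map_pow, Polynomial.aeval_C, Polynomial.aeval_X,
      ← C_eq_algebraMap, hf']
    show f - C a * w ^ (N + 1) + C a * w ^ (N + 1) = f
    ring

end ProofAux2

/-- A Laurent polynomial `f ∈ ℤ[x^{±1}]` is invariant under the ring automorphism
`x ↦ −x⁻¹` (here `σ`, a ring endomorphism with `σ(x) = −x⁻¹`) if and only if
`f = g(x − x⁻¹)` for a unique polynomial `g ∈ ℤ[z]`. -/
theorem invariant_iff_poly_in_x_sub_xinv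
    (σ : LaurentPolynomial ℤ →+* LaurentPolynomial ℤ)
    (hσ : σ (T 1) = -T (-1))
    (f : LaurentPolynomial ℤ) :
    σ f = f ↔ ∃! g : Polynomial ℤ, Polynomial.aeval (T 1 - T (-1)) g = f := by
  have hw : (T 1 - T (-1) : LaurentPolynomial ℤ) = ProofAux.w := rfl
  rw [hw]
  constructor
  · intro hinv
    have hbound : ∀ n : ℤ, ((f.coeff.support.sup fun n => n.natAbs : ℕ) : ℤ) < |n| → f.coeff n = 0 := by
      intro n hn
      by_contra h
      have hmem : n ∈ f.coeff.support := Finsupp.mem_support_iff.mpr h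
      have h2 := Finset.le_sup (f := fun n : ℤ => n.natAbs) hmem
      rw [Int.abs_eq_natAbs] at hn
      omega
    obtain ⟨g, hg⟩ :=
      ProofAux2.exists_aeval σ hσ (f.coeff.support.sup fun n => n.natAbs) f hbound hinv
    exact ⟨g, hg, fun y hy => ProofAux.aeval_w_injective (hy.trans hg.symm)⟩
  · rintro ⟨g, hg, -⟩
    rw [← hg]
    exact ProofAux2.sigma_aeval σ hσ g
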